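/- Backward super-martingale property: for k = m, m−1, …, 1, 0, put V⁺(k) = #{null j ≤ k : p_j ≤ c} and V⁻(k) = #{null j ≤ k : p_j > c} (with V±(0) = 0), and let 𝓕_k be the σ-algebra generated by all the non-null p-values together with (V⁺(k′), V⁻(k′)) for all k′ ≥ k. Then M(k) = V⁺(k) / (1 + V⁻(k)) satisfies E[ M(k−1) | 𝓕_k ] ≤ M(k) for every k ≥ 1, i.e. M is a super-martingale with respect to the backward filtration (𝓕_k). -/

import Mathlib

open MeasureTheory ProbabilityTheory

/-- `V⁺(k) = #{null j ≤ k : p_j ≤ c}`, p-values indexed by `j ∈ {1,…,m}`. -/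
noncomputable def nullCountBelow (N : Finset ℕ) (pv : ℕ → ℝ) (c : ℝ) (k : ℕ) : ℕ :=
  (N.filter fun j => j ≤ k ∧ pv j ≤ c).card

/-- `V⁻(k) = #{null j ≤ k : p_j > c}`. -/
noncomputable def nullCountAbove (N : Finset ℕ) (pv : ℕ → ℝ) (c : ℝ) (k : ℕ) : ℕ :=
  (N.filter fun j => j ≤ k ∧ c < pv j).card

/-- The σ-algebra `𝓕_k` generated by all the non-null p-values together with
`(V⁺(k′), V⁻(k′))` for all `k′ ≥ k`. -/
noncomputable def seqFiltration {Ω : Type*} (m : ℕ) (N : Finset ℕ) (pv : Ω → ℕ → ℝ)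
    (c : ℝ) (k : ℕ) : MeasurableSpace Ω :=
  MeasurableSpace.comap
      (fun ω => fun j : {j : ℕ // j ∈ Finset.Icc 1 m ∧ j ∉ N} => pv ω j.1) inferInstance
    ⊔ ⨆ k' ∈ Set.Ici k,
        MeasurableSpace.comap
          (fun ω => ((nullCountBelow N (pv ω) c k', nullCountAbove N (pv ω) c k') : ℕ × ℕ))
          inferInstance

-- aux lemma 1: card filter over subtype
lemma aux_card_filter_subtype (s : Finset ℕ) (p : ℕ → Prop) [DecidablePred p] :
    (s.filter p).card = ((Finset.univ : Finset {x // x ∈ s}).filter fun j => p j.1).card := by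
  classical
  rw [show (Finset.univ : Finset {x // x ∈ s}) = s.attach from rfl,
    Finset.filter_attach, Finset.card_map, Finset.card_attach]

-- aux lemma 2: permutation invariance of iid product
lemma aux_pi_perm {ι : Type*} [Fintype ι] (ν : Measure ℝ) [IsProbabilityMeasure ν]
    (σ : Equiv.Perm ι) :
    MeasurePreserving (fun x : ι → ℝ => x ∘ σ)
      (Measure.pi fun _ => ν) (Measure.pi fun _ => ν) := by
  have hmeas : Measurable fun x : ι → ℝ => x ∘ σ :=
    measurable_pi_lambda _ fun i => measurable_pi_apply _
  refine ⟨hmeas, ?_⟩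
  refine (Measure.pi_eq fun s hs => ?_).symm
  rw [Measure.map_apply hmeas (MeasurableSet.univ_pi hs)]
  have hpre : (fun x : ι → ℝ => x ∘ σ) ⁻¹' Set.pi Set.univ s
      = Set.pi Set.univ fun i => s (σ.symm i) := by
    ext x
    simp only [Set.mem_preimage, Set.mem_pi, Set.mem_univ, forall_true_left, Function.comp]
    constructor
    · intro h i; simpa using h (σ.symm i)
    · intro h i; simpa using h (σ i)
  rw [hpre, Measure.pi_pi]
  exact Equiv.prod_comp σ.symm fun i => ν (s i)

set_option maxHeartbeats 1000000 in
/-- **Backward super-martingale property** (Lemma 4): with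
`M(k) = V⁺(k) / (1 + V⁻(k))`, for every `k ∈ {1,…,m}` we have
`E[ M(k−1) | 𝓕_k ] ≤ M(k)` almost surely, i.e. `M` is a super-martingale with
respect to the backward filtration `(𝓕_k)`.  Here the null p-values are i.i.d.,
each stochastically dominating the uniform distribution, and are independent of
the non-null p-values. -/
theorem null_ratio_backward_supermartingale (m : ℕ)
    {Ω : Type*} [MeasurableSpace Ω] (μ : Measure Ω) [IsProbabilityMeasure μ]
    (pv : Ω → ℕ → ℝ) (hmeas : ∀ j, Measurable fun ω => pv ω j)
    (hrange : ∀ ω, ∀ j ∈ Finset.Icc 1 m, pv ω j ∈ Set.Icc (0 : ℝ) 1)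
    (N : Finset ℕ) (hN : N ⊆ Finset.Icc 1 m)
    (ν : Measure ℝ) [IsProbabilityMeasure ν]
    (hlaw : ∀ j ∈ N, Measure.map (fun ω => pv ω j) μ = ν)
    (hdom : ∀ u : ℝ, 0 ≤ u → u ≤ 1 → ν {x | x ≤ u} ≤ ENNReal.ofReal u)
    (hnullindep : iIndepFun (m := fun _ : {j // j ∈ N} => (inferInstance : MeasurableSpace ℝ))
      (fun j ω => pv ω j.1) μ)
    (hblockindep : IndepFun (fun ω (j : {j // j ∈ N}) => pv ω j.1)
      (fun ω (j : {j : ℕ // j ∈ Finset.Icc 1 m ∧ j ∉ N}) => pv ω j.1) μ)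
    (c : ℝ) (hc0 : 0 < c) (hc1 : c < 1)
    (M : ℕ → Ω → ℝ)
    (hM : ∀ k ω, M k ω
      = (nullCountBelow N (pv ω) c k : ℝ) / (1 + (nullCountAbove N (pv ω) c k : ℝ))) :
    ∀ k : ℕ, 1 ≤ k → k ≤ m →
      ∀ᵐ ω ∂μ, (μ[M (k - 1)|seqFiltration m N pv c k]) ω ≤ M k ω := by
  classical
  intro k hk1 hkm
  -- measurability of the count pair
  have hcntB_meas : ∀ r : ℕ, Measurable fun ω => nullCountBelow N (pv ω) c r := by
    intro r
    simp only [nullCountBelow, Finset.card_filter]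
    refine Finset.measurable_sum _ fun j _ => Measurable.ite ?_ measurable_const measurable_const
    rw [Set.setOf_and]
    exact (MeasurableSet.const _).inter (measurableSet_le (hmeas j) measurable_const)
  have hcntA_meas : ∀ r : ℕ, Measurable fun ω => nullCountAbove N (pv ω) c r := by
    intro r
    simp only [nullCountAbove, Finset.card_filter]
    refine Finset.measurable_sum _ fun j _ => Measurable.ite ?_ measurable_const measurable_const
    rw [Set.setOf_and]
    exact (MeasurableSet.const _).inter (measurableSet_lt measurable_const (hmeas j))
  have hcnt_meas : ∀ r : ℕ, Measurable fun ω =>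
      ((nullCountBelow N (pv ω) c r, nullCountAbove N (pv ω) c r) : ℕ × ℕ) :=
    fun r => (hcntB_meas r).prodMk (hcntA_meas r)
  have hZmeas : Measurable fun ω => fun j : {j : ℕ // j ∈ Finset.Icc 1 m ∧ j ∉ N} => pv ω j.1 :=
    measurable_pi_lambda _ fun j => hmeas j.1
  -- F is a sub-σ-algebra
  have hm : seqFiltration m N pv c k ≤ ‹MeasurableSpace Ω› := by
    rw [seqFiltration]
    refine sup_le (measurable_iff_comap_le.mp hZmeas) (iSup₂_le fun k' _ => ?_)
    exact measurable_iff_comap_le.mp (hcnt_meas k')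
  haveI : SigmaFinite (μ.trim hm) := by infer_instance
  -- integrability of M r
  have hMeq : ∀ r, M r = fun ω => ((nullCountBelow N (pv ω) c r : ℝ)
      / (1 + (nullCountAbove N (pv ω) c r : ℝ))) := fun r => funext fun ω => hM r ω
  have hMmeas : ∀ r, Measurable (M r) := by
    intro r
    rw [hMeq r]
    exact (measurable_from_top.comp (hcntB_meas r)).div
      (measurable_const.add (measurable_from_top.comp (hcntA_meas r)))
  have hMbdd : ∀ r ω, ‖M r ω‖ ≤ (N.card : ℝ) := by
    intro r ω
    rw [hM r ω, Real.norm_eq_abs]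
    have h1 : (0:ℝ) ≤ (nullCountBelow N (pv ω) c r : ℝ) := Nat.cast_nonneg _
    have h2 : (0:ℝ) ≤ (nullCountAbove N (pv ω) c r : ℝ) := Nat.cast_nonneg _
    have h3 : (nullCountBelow N (pv ω) c r : ℝ) ≤ (N.card : ℝ) := by
      exact_mod_cast Nat.cast_le.mpr (Finset.card_filter_le _ _)
    rw [abs_of_nonneg (div_nonneg h1 (by linarith))]
    exact le_trans (div_le_self h1 (by linarith)) h3
  have hint : ∀ r, Integrable (M r) μ := by
    intro r
    exact ⟨(hMmeas r).aestronglyMeasurable,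
      HasFiniteIntegral.of_bounded (C := (N.card : ℝ)) (Filter.Eventually.of_forall (hMbdd r))⟩
  -- M k is F-strongly measurable
  have hMkSM : StronglyMeasurable[seqFiltration m N pv c k] (M k) := by
    have h1 : MeasurableSpace.comap (fun ω =>
        ((nullCountBelow N (pv ω) c k, nullCountAbove N (pv ω) c k) : ℕ × ℕ)) inferInstance
        ≤ seqFiltration m N pv c k := by
      rw [seqFiltration]
      exact le_sup_of_le_right (le_iSup₂ (f := fun k' (_ : k' ∈ Set.Ici k) =>
        MeasurableSpace.comap (fun ω => ((nullCountBelow N (pv ω) c k',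
          nullCountAbove N (pv ω) c k') : ℕ × ℕ)) inferInstance) k (Set.mem_Ici.mpr le_rfl))
    have h2 : Measurable[MeasurableSpace.comap (fun ω =>
        ((nullCountBelow N (pv ω) c k, nullCountAbove N (pv ω) c k) : ℕ × ℕ)) inferInstance]
        (M k) := by
      rw [hMeq k]
      have hφ : Measurable[MeasurableSpace.comap (fun ω =>
          ((nullCountBelow N (pv ω) c k, nullCountAbove N (pv ω) c k) : ℕ × ℕ)) inferInstance]
          (fun ω => ((nullCountBelow N (pv ω) c k, nullCountAbove N (pv ω) c k) : ℕ × ℕ)) :=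
        measurable_iff_comap_le.mpr le_rfl
      exact ((measurable_from_top.comp (measurable_fst.comp hφ)).div
        (measurable_const.add (measurable_from_top.comp (measurable_snd.comp hφ))))
    exact (h2.mono h1 le_rfl).stronglyMeasurable
  -- the key set-integral inequality
  have key : ∀ s, MeasurableSet[seqFiltration m N pv c k] s →
      ∫ ω in s, M (k-1) ω ∂μ ≤ ∫ ω in s, M k ω ∂μ := by
    by_cases hkN : k ∈ N
    · -- k ∈ N : exchangeability argument
      intro s hs
      set X : Ω → ({j // j ∈ N} → ℝ) := fun ω j => pv ω j.1 with hXdef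
      set Z : Ω → ({j : ℕ // j ∈ Finset.Icc 1 m ∧ j ∉ N} → ℝ) := fun ω j => pv ω j.1 with hZdef
      set Y : Ω → ({j // j ∈ N} → ℝ) × ({j : ℕ // j ∈ Finset.Icc 1 m ∧ j ∉ N} → ℝ) :=
        fun ω => (X ω, Z ω) with hYdef
      set cB : (({j // j ∈ N} → ℝ) × ({j : ℕ // j ∈ Finset.Icc 1 m ∧ j ∉ N} → ℝ)) → ℕ → ℕ :=
        fun x r => (Finset.univ.filter fun j : {j // j ∈ N} => j.1 ≤ r ∧ x.1 j ≤ c).card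
        with hcBdef
      set cA : (({j // j ∈ N} → ℝ) × ({j : ℕ // j ∈ Finset.Icc 1 m ∧ j ∉ N} → ℝ)) → ℕ → ℕ :=
        fun x r => (Finset.univ.filter fun j : {j // j ∈ N} => j.1 ≤ r ∧ c < x.1 j).card
        with hcAdef
      set g : ℕ → (({j // j ∈ N} → ℝ) × ({j : ℕ // j ∈ Finset.Icc 1 m ∧ j ∉ N} → ℝ)) → ℝ :=
        fun r x => (cB x r : ℝ) / (1 + (cA x r : ℝ)) with hgdef
      -- correspondence between Ω-side and E-side counts
      have hcorrB : ∀ ω r, nullCountBelow N (pv ω) c r = cB (Y ω) r := by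
        intro ω r
        rw [nullCountBelow, aux_card_filter_subtype N (fun j => j ≤ r ∧ pv ω j ≤ c)]
      have hcorrA : ∀ ω r, nullCountAbove N (pv ω) c r = cA (Y ω) r := by
        intro ω r
        rw [nullCountAbove, aux_card_filter_subtype N (fun j => j ≤ r ∧ c < pv ω j)]
      -- measurability on the E side
      have hcBmeas : ∀ r, Measurable (cB · r) := by
        intro r
        simp only [hcBdef, Finset.card_filter]
        refine Finset.measurable_sum _ fun j _ => Measurable.ite ?_ measurable_const
          measurable_const
        rw [Set.setOf_and]
        exact (MeasurableSet.const _).inter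
          (measurableSet_le measurable_fst.eval measurable_const)
      have hcAmeas : ∀ r, Measurable (cA · r) := by
        intro r
        simp only [hcAdef, Finset.card_filter]
        refine Finset.measurable_sum _ fun j _ => Measurable.ite ?_ measurable_const
          measurable_const
        rw [Set.setOf_and]
        exact (MeasurableSet.const _).inter
          (measurableSet_lt measurable_const measurable_fst.eval)
      have hgmeas : ∀ r, Measurable (g r) := by
        intro r
        simp only [hgdef]
        exact (measurable_from_top.comp (hcBmeas r)).div
          (measurable_const.add (measurable_from_top.comp (hcAmeas r)))
      -- the map Φ generating the filtration
      set Φ : Ω → (({j : ℕ // j ∈ Finset.Icc 1 m ∧ j ∉ N} → ℝ) × (ℕ → ℕ × ℕ)) :=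
        fun ω => (Z ω, fun r => ((nullCountBelow N (pv ω) c (max k r),
          nullCountAbove N (pv ω) c (max k r)) : ℕ × ℕ)) with hΦdef
      have hFleΦ : seqFiltration m N pv c k ≤ MeasurableSpace.comap Φ inferInstance := by
        rw [seqFiltration]
        apply sup_le
        · have h1 : (fun ω => fun j : {j : ℕ // j ∈ Finset.Icc 1 m ∧ j ∉ N} => pv ω j.1)
              = Prod.fst ∘ Φ := rfl
          rw [h1, ← MeasurableSpace.comap_comp]
          exact MeasurableSpace.comap_mono (measurable_iff_comap_le.mp measurable_fst)
        · refine iSup₂_le fun k' hk' => ?_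
          have h1 : (fun ω => ((nullCountBelow N (pv ω) c k', nullCountAbove N (pv ω) c k')
              : ℕ × ℕ)) = (fun p : (({j : ℕ // j ∈ Finset.Icc 1 m ∧ j ∉ N} → ℝ)
                × (ℕ → ℕ × ℕ)) => p.2 k') ∘ Φ := by
            funext ω
            simp only [hΦdef, Function.comp_apply, max_eq_right (Set.mem_Ici.mp hk')]
          rw [h1, ← MeasurableSpace.comap_comp]
          exact MeasurableSpace.comap_mono
            (measurable_iff_comap_le.mp ((measurable_pi_apply k').comp measurable_snd))
      obtain ⟨B, hB, hsB⟩ := MeasurableSpace.measurableSet_comap.mp (hFleΦ s hs)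
      set Φ' : (({j // j ∈ N} → ℝ) × ({j : ℕ // j ∈ Finset.Icc 1 m ∧ j ∉ N} → ℝ)) →
          (({j : ℕ // j ∈ Finset.Icc 1 m ∧ j ∉ N} → ℝ) × (ℕ → ℕ × ℕ)) :=
        fun x => (x.2, fun r => ((cB x (max k r), cA x (max k r)) : ℕ × ℕ)) with hΦ'def
      have hΦ'meas : Measurable Φ' := by
        simp only [hΦ'def]
        exact measurable_snd.prodMk (measurable_pi_lambda _ fun r =>
          (hcBmeas _).prodMk (hcAmeas _))
      have hΦfact : Φ = Φ' ∘ Y := by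
        funext ω
        simp only [hΦdef, hΦ'def, Function.comp_apply, hYdef, hcorrB, hcorrA]
      set A : Set (({j // j ∈ N} → ℝ) × ({j : ℕ // j ∈ Finset.Icc 1 m ∧ j ∉ N} → ℝ)) :=
        Φ' ⁻¹' B with hAdef
      have hA : MeasurableSet A := hΦ'meas hB
      have hsY : s = Y ⁻¹' A := by
        rw [hAdef, ← Set.preimage_comp, ← hΦfact, hsB]
      have hXmeas : Measurable X := measurable_pi_lambda _ fun j => hmeas j.1
      have hYmeas : Measurable Y := hXmeas.prodMk hZmeas
      set P : Measure (({j // j ∈ N} → ℝ) × ({j : ℕ // j ∈ Finset.Icc 1 m ∧ j ∉ N} → ℝ)) :=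
        Measure.map Y μ with hPdef
      haveI : IsProbabilityMeasure P := Measure.isProbabilityMeasure_map hYmeas.aemeasurable
      haveI : IsProbabilityMeasure (Measure.map Z μ) :=
        Measure.isProbabilityMeasure_map hZmeas.aemeasurable
      have hMg : ∀ r ω, M r ω = g r (Y ω) := by
        intro r ω
        rw [hM, hgdef]
        simp only [hcorrB, hcorrA]
      -- integral transfer
      have htrans : ∀ r, ∫ ω in s, M r ω ∂μ = ∫ x in A, g r x ∂P := by
        intro r
        calc ∫ ω in s, M r ω ∂μ = ∫ ω in Y ⁻¹' A, g r (Y ω) ∂μ := by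
              simp only [hMg]; rw [← hsY]
          _ = ∫ x in A, g r x ∂P :=
              (setIntegral_map hA (hgmeas r).aestronglyMeasurable hYmeas.aemeasurable).symm
      -- product structure of P
      have hmapX : Measure.map X μ = Measure.pi (fun _ : {j // j ∈ N} => ν) := by
        refine (Measure.pi_eq fun t ht => ?_).symm
        rw [Measure.map_apply hXmeas (MeasurableSet.univ_pi ht)]
        have hpre : X ⁻¹' Set.pi Set.univ t
            = ⋂ j ∈ (Finset.univ : Finset {j // j ∈ N}), (fun ω => pv ω j.1) ⁻¹' t j := by
          ext ω; simp [hXdef, Set.mem_pi]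
        rw [hpre, hnullindep.measure_inter_preimage_eq_mul Finset.univ (fun j _ => ht j)]
        refine Finset.prod_congr rfl fun j _ => ?_
        rw [← hlaw j.1 j.2, Measure.map_apply (hmeas j.1) (ht j)]
      have hprod : P = (Measure.pi (fun _ : {j // j ∈ N} => ν)).prod (Measure.map Z μ) := by
        rw [hPdef, hYdef, ← hmapX]
        exact (indepFun_iff_map_prod_eq_prod_map_map hXmeas.aemeasurable
          hZmeas.aemeasurable).mp hblockindep
      -- the swap maps
      set kJ : {j // j ∈ N} := ⟨k, hkN⟩ with hkJdef
      set S : Finset {j // j ∈ N} := Finset.univ.filter (fun j => j.1 ≤ k) with hSdef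
      set T : {j // j ∈ N} →
          (({j // j ∈ N} → ℝ) × ({j : ℕ // j ∈ Finset.Icc 1 m ∧ j ∉ N} → ℝ)) →
          (({j // j ∈ N} → ℝ) × ({j : ℕ // j ∈ Finset.Icc 1 m ∧ j ∉ N} → ℝ)) :=
        fun j => Prod.map (fun y => y ∘ Equiv.swap j kJ) id with hTdef
      have hTmeas : ∀ j, Measurable (T j) := fun j =>
        (measurable_pi_lambda _ fun i => measurable_pi_apply _).prodMap measurable_id
      have hTpres : ∀ j, MeasurePreserving (T j) P P := by
        intro j
        rw [hprod, hTdef]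
        exact (aux_pi_perm ν (Equiv.swap j kJ)).prod (MeasurePreserving.id _)
      have hT1 : ∀ j x, (T j x).1 = x.1 ∘ Equiv.swap j kJ := fun j x => rfl
      have hT2 : ∀ j x, (T j x).2 = x.2 := fun j x => rfl
      -- swap invariance of counts for r ≥ k
      have hσle : ∀ (j : {j // j ∈ N}), j.1 ≤ k → ∀ r, k ≤ r →
          ∀ i : {j // j ∈ N}, ((Equiv.swap j kJ i : {j // j ∈ N}).1 ≤ r ↔ i.1 ≤ r) := by
        intro j hjk r hkr i
        rcases eq_or_ne i j with rfl | h1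
        · rw [Equiv.swap_apply_left]
          exact iff_of_true (le_trans (le_of_eq rfl) hkr) (le_trans hjk hkr)
        · rcases eq_or_ne i kJ with rfl | h2
          · rw [Equiv.swap_apply_right]
            exact iff_of_true (le_trans hjk hkr) (le_trans (le_of_eq rfl) hkr)
          · rw [Equiv.swap_apply_of_ne_of_ne h1 h2]
      have hswapB : ∀ (j : {j // j ∈ N}), j.1 ≤ k → ∀ x r, k ≤ r →
          cB (T j x) r = cB x r := by
        intro j hjk x r hkr
        simp only [hcBdef, hT1]
        refine Finset.card_bij' (fun i _ => Equiv.swap j kJ i) (fun i _ => Equiv.swap j kJ i)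
          ?_ ?_ ?_ ?_
        · intro i hi
          obtain ⟨-, h1, h2⟩ := Finset.mem_filter.mp hi
          exact Finset.mem_filter.mpr ⟨Finset.mem_univ _,
            (hσle j hjk r hkr i).mpr h1, h2⟩
        · intro i hi
          obtain ⟨-, h1, h2⟩ := Finset.mem_filter.mp hi
          refine Finset.mem_filter.mpr ⟨Finset.mem_univ _,
            (hσle j hjk r hkr i).mpr h1, ?_⟩
          simpa [Function.comp, Equiv.swap_apply_self] using h2
        · intro i _; exact Equiv.swap_apply_self _ _ _
        · intro i _; exact Equiv.swap_apply_self _ _ _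
      have hswapA : ∀ (j : {j // j ∈ N}), j.1 ≤ k → ∀ x r, k ≤ r →
          cA (T j x) r = cA x r := by
        intro j hjk x r hkr
        simp only [hcAdef, hT1]
        refine Finset.card_bij' (fun i _ => Equiv.swap j kJ i) (fun i _ => Equiv.swap j kJ i)
          ?_ ?_ ?_ ?_
        · intro i hi
          obtain ⟨-, h1, h2⟩ := Finset.mem_filter.mp hi
          exact Finset.mem_filter.mpr ⟨Finset.mem_univ _,
            (hσle j hjk r hkr i).mpr h1, h2⟩
        · intro i hi
          obtain ⟨-, h1, h2⟩ := Finset.mem_filter.mp hi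
          refine Finset.mem_filter.mpr ⟨Finset.mem_univ _,
            (hσle j hjk r hkr i).mpr h1, ?_⟩
          simpa [Function.comp, Equiv.swap_apply_self] using h2
        · intro i _; exact Equiv.swap_apply_self _ _ _
        · intro i _; exact Equiv.swap_apply_self _ _ _
      -- the truncation identity: i ≤ k-1 iff i ≤ k and i ≠ kJ
      have hk1iff : ∀ i : {j // j ∈ N}, (i.1 ≤ k - 1) ↔ (i ≠ kJ ∧ i.1 ≤ k) := by
        intro i
        constructor
        · intro h
          refine ⟨fun hik => ?_, h.trans (Nat.sub_le _ _)⟩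
          rw [hik] at h
          simp only [hkJdef] at h
          omega
        · rintro ⟨h1, h2⟩
          have h3 : i.1 ≠ k := fun hh => h1 (Subtype.ext hh)
          omega
      -- decrement identities
      have hdecB : ∀ j, j ∈ S → ∀ x, x.1 j ≤ c →
          cB (T j x) (k-1) + 1 = cB x k ∧ cA (T j x) (k-1) = cA x k := by
        intro j hj x hjc
        have hjk : j.1 ≤ k := (Finset.mem_filter.mp hj).2
        constructor
        · have e1 : (Finset.univ.filter fun i : {j // j ∈ N} =>
              i.1 ≤ k - 1 ∧ (T j x).1 i ≤ c)
              = (Finset.univ.filter fun i : {j // j ∈ N} =>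
                i.1 ≤ k ∧ (T j x).1 i ≤ c).erase kJ := by
            ext i
            simp only [Finset.mem_filter, Finset.mem_erase, Finset.mem_univ, true_and]
            rw [hk1iff i]
            tauto
          have hkJmem : kJ ∈ (Finset.univ.filter fun i : {j // j ∈ N} =>
              i.1 ≤ k ∧ (T j x).1 i ≤ c) := by
            refine Finset.mem_filter.mpr ⟨Finset.mem_univ _, le_rfl, ?_⟩
            rw [hT1]
            simpa [Function.comp, Equiv.swap_apply_right] using hjc
          have e2 : cB (T j x) (k-1)
              = (Finset.univ.filter fun i : {j // j ∈ N} =>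
                i.1 ≤ k ∧ (T j x).1 i ≤ c).card - 1 := by
            simp only [hcBdef]
            rw [e1, Finset.card_erase_of_mem hkJmem]
          have e3 : (Finset.univ.filter fun i : {j // j ∈ N} =>
              i.1 ≤ k ∧ (T j x).1 i ≤ c).card = cB x k := by
            have := hswapB j hjk x k le_rfl
            simpa only [hcBdef] using this
          have e4 : 1 ≤ (Finset.univ.filter fun i : {j // j ∈ N} =>
              i.1 ≤ k ∧ (T j x).1 i ≤ c).card :=
            Finset.card_pos.mpr ⟨kJ, hkJmem⟩
          omega
        · have e1 : (Finset.univ.filter fun i : {j // j ∈ N} =>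
              i.1 ≤ k - 1 ∧ c < (T j x).1 i)
              = (Finset.univ.filter fun i : {j // j ∈ N} =>
                i.1 ≤ k ∧ c < (T j x).1 i).erase kJ := by
            ext i
            simp only [Finset.mem_filter, Finset.mem_erase, Finset.mem_univ, true_and]
            rw [hk1iff i]
            tauto
          have hkJnmem : kJ ∉ (Finset.univ.filter fun i : {j // j ∈ N} =>
              i.1 ≤ k ∧ c < (T j x).1 i) := by
            intro hmem
            obtain ⟨-, -, h2⟩ := Finset.mem_filter.mp hmem
            rw [hT1] at h2
            simp only [Function.comp, Equiv.swap_apply_right] at h2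
            exact absurd hjc (not_le.mpr h2)
          have e2 : cA (T j x) (k-1) = cA (T j x) k := by
            simp only [hcAdef]
            rw [e1, Finset.erase_eq_of_notMem hkJnmem]
          rw [e2]
          exact hswapA j hjk x k le_rfl
      have hdecA : ∀ j, j ∈ S → ∀ x, ¬ x.1 j ≤ c →
          cB (T j x) (k-1) = cB x k ∧ cA (T j x) (k-1) + 1 = cA x k := by
        intro j hj x hjc
        have hjk : j.1 ≤ k := (Finset.mem_filter.mp hj).2
        constructor
        · have e1 : (Finset.univ.filter fun i : {j // j ∈ N} =>
              i.1 ≤ k - 1 ∧ (T j x).1 i ≤ c)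
              = (Finset.univ.filter fun i : {j // j ∈ N} =>
                i.1 ≤ k ∧ (T j x).1 i ≤ c).erase kJ := by
            ext i
            simp only [Finset.mem_filter, Finset.mem_erase, Finset.mem_univ, true_and]
            rw [hk1iff i]
            tauto
          have hkJnmem : kJ ∉ (Finset.univ.filter fun i : {j // j ∈ N} =>
              i.1 ≤ k ∧ (T j x).1 i ≤ c) := by
            intro hmem
            obtain ⟨-, -, h2⟩ := Finset.mem_filter.mp hmem
            rw [hT1] at h2
            simp only [Function.comp, Equiv.swap_apply_right] at h2
            exact hjc h2
          have e2 : cB (T j x) (k-1) = cB (T j x) k := by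
            simp only [hcBdef]
            rw [e1, Finset.erase_eq_of_notMem hkJnmem]
          rw [e2]
          exact hswapB j hjk x k le_rfl
        · have hjc' : c < x.1 j := not_le.mp hjc
          have e1 : (Finset.univ.filter fun i : {j // j ∈ N} =>
              i.1 ≤ k - 1 ∧ c < (T j x).1 i)
              = (Finset.univ.filter fun i : {j // j ∈ N} =>
                i.1 ≤ k ∧ c < (T j x).1 i).erase kJ := by
            ext i
            simp only [Finset.mem_filter, Finset.mem_erase, Finset.mem_univ, true_and]
            rw [hk1iff i]
            tauto
          have hkJmem : kJ ∈ (Finset.univ.filter fun i : {j // j ∈ N} =>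
              i.1 ≤ k ∧ c < (T j x).1 i) := by
            refine Finset.mem_filter.mpr ⟨Finset.mem_univ _, le_rfl, ?_⟩
            rw [hT1]
            simpa [Function.comp, Equiv.swap_apply_right] using hjc'
          have e2 : cA (T j x) (k-1)
              = (Finset.univ.filter fun i : {j // j ∈ N} =>
                i.1 ≤ k ∧ c < (T j x).1 i).card - 1 := by
            simp only [hcAdef]
            rw [e1, Finset.card_erase_of_mem hkJmem]
          have e3 : (Finset.univ.filter fun i : {j // j ∈ N} =>
              i.1 ≤ k ∧ c < (T j x).1 i).card = cA x k := by
            have := hswapA j hjk x k le_rfl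
            simpa only [hcAdef] using this
          have e4 : 1 ≤ (Finset.univ.filter fun i : {j // j ∈ N} =>
              i.1 ≤ k ∧ c < (T j x).1 i).card :=
            Finset.card_pos.mpr ⟨kJ, hkJmem⟩
          omega
      -- counting: cB + cA at level k equals the number of nulls ≤ k
      have hfilt1 : ∀ x, (S.filter fun j => x.1 j ≤ c).card = cB x k := by
        intro x
        simp only [hSdef, hcBdef, Finset.filter_filter]
      have hfilt2 : ∀ x, (S.filter fun j => ¬ x.1 j ≤ c).card = cA x k := by
        intro x
        simp only [hSdef, hcAdef, Finset.filter_filter, not_le]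
      have hcardsum : ∀ x, cB x k + cA x k = S.card := by
        intro x
        rw [← hfilt1 x, ← hfilt2 x]
        exact Finset.card_filter_add_card_filter_not _
      -- pointwise inequality
      have hptwise : ∀ x, (∑ j ∈ S, g (k-1) (T j x)) ≤ (S.card : ℝ) * g k x := by
        intro x
        rw [← Finset.sum_filter_add_sum_filter_not S (fun j => x.1 j ≤ c)]
        have ha : (0:ℝ) ≤ (cB x k : ℝ) := Nat.cast_nonneg _
        have hb : (0:ℝ) ≤ (cA x k : ℝ) := Nat.cast_nonneg _
        have h1b : (0:ℝ) < 1 + (cA x k : ℝ) := by linarith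
        have hterm1 : ∀ j ∈ S.filter (fun j => x.1 j ≤ c),
            g (k-1) (T j x) = ((cB x k : ℝ) - 1) / (1 + (cA x k : ℝ)) := by
          intro j hj
          obtain ⟨hjS, hjc⟩ := Finset.mem_filter.mp hj
          obtain ⟨e1, e2⟩ := hdecB j hjS x hjc
          have e1' : (cB (T j x) (k-1) : ℝ) = (cB x k : ℝ) - 1 := by
            rw [eq_sub_iff_add_eq]
            exact_mod_cast e1
          have e2' : (cA (T j x) (k-1) : ℝ) = (cA x k : ℝ) := by exact_mod_cast e2
          simp only [hgdef]
          rw [e1', e2']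
        have hsum1 : ∑ j ∈ S.filter (fun j => x.1 j ≤ c), g (k-1) (T j x)
            = (cB x k : ℝ) * (((cB x k : ℝ) - 1) / (1 + (cA x k : ℝ))) := by
          rw [Finset.sum_congr rfl hterm1, Finset.sum_const, hfilt1 x, nsmul_eq_mul]
        have hterm2 : ∀ j ∈ S.filter (fun j => ¬ x.1 j ≤ c),
            g (k-1) (T j x) = (cB x k : ℝ) / (cA x k : ℝ) := by
          intro j hj
          obtain ⟨hjS, hjc⟩ := Finset.mem_filter.mp hj
          obtain ⟨e1, e2⟩ := hdecA j hjS x hjc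
          have e1' : (cB (T j x) (k-1) : ℝ) = (cB x k : ℝ) := by exact_mod_cast e1
          have e2' : 1 + (cA (T j x) (k-1) : ℝ) = (cA x k : ℝ) := by
            rw [add_comm]
            exact_mod_cast e2
          simp only [hgdef]
          rw [e1', e2']
        have hsum2 : ∑ j ∈ S.filter (fun j => ¬ x.1 j ≤ c), g (k-1) (T j x)
            = (cA x k : ℝ) * ((cB x k : ℝ) / (cA x k : ℝ)) := by
          rw [Finset.sum_congr rfl hterm2, Finset.sum_const, hfilt2 x, nsmul_eq_mul]
        rw [hsum1, hsum2]
        have hcard : (S.card : ℝ) = (cB x k : ℝ) + (cA x k : ℝ) := by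
          exact_mod_cast (hcardsum x).symm
        rw [hcard]
        simp only [hgdef]
        rcases eq_or_lt_of_le hb with hb0 | hb0
        · rw [← hb0]
          have h10 : (1:ℝ) + 0 = 1 := by norm_num
          rw [zero_mul, add_zero, h10, div_one, div_one, add_zero]
          nlinarith [ha]
        · have e5 : (cA x k : ℝ) * ((cB x k : ℝ) / (cA x k : ℝ)) = (cB x k : ℝ) :=
            mul_div_cancel₀ _ (ne_of_gt hb0)
          rw [e5, div_eq_mul_inv, div_eq_mul_inv]
          have hu : (1 + (cA x k : ℝ)) * (1 + (cA x k : ℝ))⁻¹ = 1 :=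
            mul_inv_cancel₀ (ne_of_gt h1b)
          nlinarith [hu, ha, hb]
      -- invariance of A under the swaps
      have hTA : ∀ j ∈ S, (T j) ⁻¹' A = A := by
        intro j hj
        have hjk : j.1 ≤ k := (Finset.mem_filter.mp hj).2
        have hcomp : Φ' ∘ (T j) = Φ' := by
          funext x
          simp only [Function.comp_apply, hΦ'def, hT2, Prod.mk.injEq]
          refine ⟨trivial, funext fun r => ?_⟩
          rw [hswapB j hjk x _ (le_max_left _ _), hswapA j hjk x _ (le_max_left _ _)]
        rw [hAdef, ← Set.preimage_comp, hcomp]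
      -- integrability on the E side
      have hgbdd : ∀ r x, ‖g r x‖ ≤ (N.card : ℝ) := by
        intro r x
        simp only [hgdef, Real.norm_eq_abs]
        have h1 : (0:ℝ) ≤ (cB x r : ℝ) := Nat.cast_nonneg _
        have h2 : (0:ℝ) ≤ (cA x r : ℝ) := Nat.cast_nonneg _
        have h3 : (cB x r : ℝ) ≤ (N.card : ℝ) := by
          have : cB x r ≤ N.card := by
            simp only [hcBdef]
            calc (Finset.univ.filter fun j : {j // j ∈ N} => j.1 ≤ r ∧ x.1 j ≤ c).card
                ≤ (Finset.univ : Finset {j // j ∈ N}).card := Finset.card_filter_le _ _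
              _ = N.card := by rw [Finset.card_univ, Fintype.card_coe]
          exact_mod_cast this
        rw [abs_of_nonneg (div_nonneg h1 (by linarith))]
        exact le_trans (div_le_self h1 (by linarith)) h3
      have hgint : ∀ r, Integrable (g r) P :=
        fun r => ⟨(hgmeas r).aestronglyMeasurable,
          HasFiniteIntegral.of_bounded (C := (N.card : ℝ))
            (Filter.Eventually.of_forall (hgbdd r))⟩
      have hgintT : ∀ j, Integrable (fun x => g (k-1) (T j x)) P :=
        fun j => ⟨((hgmeas _).comp (hTmeas j)).aestronglyMeasurable,
          HasFiniteIntegral.of_bounded (C := (N.card : ℝ))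
            (Filter.Eventually.of_forall fun x => hgbdd _ _)⟩
      -- change of variables along each swap
      have hstep : ∀ j ∈ S, ∫ x in A, g (k-1) x ∂P = ∫ x in A, g (k-1) (T j x) ∂P := by
        intro j hj
        conv_lhs => rw [← (hTpres j).map_eq]
        rw [setIntegral_map hA (hgmeas (k-1)).aestronglyMeasurable
          ((hTmeas j).aemeasurable), hTA j hj]
      -- put everything together
      rw [htrans (k-1), htrans k]
      have hSpos : 0 < S.card := Finset.card_pos.mpr
        ⟨kJ, by simp only [hSdef]; exact Finset.mem_filter.mpr ⟨Finset.mem_univ _, le_rfl⟩⟩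
      have hchain : (S.card : ℝ) * ∫ x in A, g (k-1) x ∂P
          ≤ (S.card : ℝ) * ∫ x in A, g k x ∂P := by
        have step1 : (S.card : ℝ) * ∫ x in A, g (k-1) x ∂P
            = ∑ j ∈ S, ∫ x in A, g (k-1) (T j x) ∂P := by
          have h0 : ∑ j ∈ S, ∫ x in A, g (k-1) (T j x) ∂P
              = ∑ _j ∈ S, ∫ x in A, g (k-1) x ∂P :=
            Finset.sum_congr rfl fun j hj => (hstep j hj).symm
          rw [h0, Finset.sum_const, nsmul_eq_mul]
        rw [step1]
        calc ∑ j ∈ S, ∫ x in A, g (k-1) (T j x) ∂P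
            = ∫ x in A, (∑ j ∈ S, g (k-1) (T j x)) ∂P :=
              (integral_finset_sum S fun j _ => (hgintT j).restrict).symm
          _ ≤ ∫ x in A, (S.card : ℝ) * g k x ∂P := by
              refine setIntegral_mono ?_ ?_ hptwise
              · exact (integrable_finset_sum S fun j _ => hgintT j).restrict
              · exact ((hgint k).const_mul _).restrict
          _ = (S.card : ℝ) * ∫ x in A, g k x ∂P := integral_const_mul _ _
      exact le_of_mul_le_mul_left hchain (by exact_mod_cast hSpos)
    · intro s hs
      have hMeqk : M (k-1) = M k := by
        funext ω
        rw [hM, hM]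
        have h1 : nullCountBelow N (pv ω) c (k-1) = nullCountBelow N (pv ω) c k := by
          unfold nullCountBelow
          congr 1
          apply Finset.filter_congr
          intro x hx
          have hxk : x ≠ k := fun h => hkN (h ▸ hx)
          have h2 : (x ≤ k - 1) ↔ (x ≤ k) := by omega
          exact and_congr h2 Iff.rfl
        have h2 : nullCountAbove N (pv ω) c (k-1) = nullCountAbove N (pv ω) c k := by
          unfold nullCountAbove
          congr 1
          apply Finset.filter_congr
          intro x hx
          have hxk : x ≠ k := fun h => hkN (h ▸ hx)
          have h2 : (x ≤ k - 1) ↔ (x ≤ k) := by omega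
          exact and_congr h2 Iff.rfl
        rw [h1, h2]
      rw [hMeqk]
  -- conclude
  have hle : (μ[M (k-1)|seqFiltration m N pv c k]) ≤ᵐ[μ.trim hm] M k := by
    apply ae_le_of_forall_setIntegral_le (integrable_condExp.trim hm stronglyMeasurable_condExp)
      ((hint k).trim hm hMkSM)
    intro s hs _
    rw [← setIntegral_trim hm stronglyMeasurable_condExp hs, ← setIntegral_trim hm hMkSM hs,
      setIntegral_condExp hm (hint (k-1)) hs]
    exact key s hs
  exact ae_le_of_ae_le_trim hle
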